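/- Let H be a real Hilbert space and let f, g ∈ Γ0(H) be such that the Fenchel conjugates f* and g* are bounded from below. Then ‖prox_f(x)‖ = ‖prox_g(x)‖ for all x ∈ H if and only if prox_f(x) = prox_g(x) for all x ∈ H. -/

import Mathlib

open scoped InnerProductSpace
noncomputable section

variable {H : Type*} [NormedAddCommGroup H] [InnerProductSpace ℝ H] [CompleteSpace H]

/-- Convexity for extended-real-valued functions on a real Hilbert space. -/
def ERealConvexOn (f : H → EReal) : Prop :=
  ∀ x y : H, ∀ a b : ℝ, 0 ≤ a → 0 ≤ b → a + b = 1 →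
    f (a • x + b • y) ≤ (a : EReal) * f x + (b : EReal) * f y

/-- `f ∈ Γ₀(H)`: proper (never `⊥`, not identically `⊤`), convex and lower semicontinuous. -/
def Gamma0 (f : H → EReal) : Prop :=
  (∃ x, f x ≠ ⊤) ∧ (∀ x, f x ≠ ⊥) ∧ ERealConvexOn f ∧ LowerSemicontinuous f

/-- `p` is the proximal point of `f` at `x`, i.e. `p` minimizes `y ↦ f y + (1/2)‖x - y‖²`. -/
def IsProx (f : H → EReal) (x p : H) : Prop :=
  ∀ y : H, f p + (((1:ℝ)/2 * ‖x - p‖ ^ 2 : ℝ) : EReal)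
    ≤ f y + (((1:ℝ)/2 * ‖x - y‖ ^ 2 : ℝ) : EReal)

/-- The Fenchel (Legendre-Fenchel) conjugate of `f`. -/
def fenchel (f : H → EReal) (p : H) : EReal :=
  ⨆ v : H, ((⟪p, v⟫_ℝ : ℝ) : EReal) - f v
-- ===== Auxiliary development =====

set_option linter.unusedSectionVars false

structure GradPkg (H : Type*) [NormedAddCommGroup H] [InnerProductSpace ℝ H] where
  P : H → H
  F : H → ℝ
  lower : ∀ x y : H, F x + ⟪P x, y - x⟫_ℝ ≤ F y
  upper : ∀ x y : H, F y ≤ F x + ⟪P x, y - x⟫_ℝ + (1/2) * ‖y - x‖^2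
  bdd : ∃ c : ℝ, ∀ x, c ≤ F x

namespace GradPkg

variable (A : GradPkg H)

def m : ℝ := sInf (Set.range A.F)

lemma bddBelow_range : BddBelow (Set.range A.F) := by
  obtain ⟨c, hc⟩ := A.bdd
  exact ⟨c, by rintro y ⟨x, rfl⟩; exact hc x⟩

lemma m_le (x : H) : A.m ≤ A.F x :=
  csInf_le A.bddBelow_range ⟨x, rfl⟩

lemma exists_lt (δ : ℝ) (hδ : 0 < δ) : ∃ z, A.F z < A.m + δ := by
  obtain ⟨y, hy, hlt⟩ := Real.lt_sInf_add_pos (s := Set.range A.F) ⟨A.F 0, ⟨0, rfl⟩⟩ hδ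
  obtain ⟨z, rfl⟩ := hy
  exact ⟨z, hlt⟩

/-- Strengthened lower bound. -/
lemma lower' (x y : H) :
    A.F x + ⟪A.P x, y - x⟫_ℝ + (1/2) * ‖A.P y - A.P x‖^2 ≤ A.F y := by
  have h1 := A.lower x (y - (A.P y - A.P x))
  have h2 := A.upper y (y - (A.P y - A.P x))
  have e1 : y - (A.P y - A.P x) - x = (y - x) - (A.P y - A.P x) := by abel
  have e2 : y - (A.P y - A.P x) - y = -(A.P y - A.P x) := by abel
  rw [e1, inner_sub_right] at h1
  rw [e2, inner_neg_right, norm_neg] at h2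
  have e3 : ⟪A.P y, A.P y - A.P x⟫_ℝ - ⟪A.P x, A.P y - A.P x⟫_ℝ
      = ‖A.P y - A.P x‖^2 := by
    rw [← inner_sub_left, real_inner_self_eq_norm_sq]
  linarith

/-- Firm nonexpansiveness of the gradient field. -/
lemma firm (x y : H) : ‖A.P y - A.P x‖^2 ≤ ⟪A.P y - A.P x, y - x⟫_ℝ := by
  have h1 := A.lower' x y
  have h2 := A.lower' y x
  have e1 : ⟪A.P y, x - y⟫_ℝ = -⟪A.P y, y - x⟫_ℝ := by
    rw [← inner_neg_right]; congr 1; abel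
  have e2 : ‖A.P x - A.P y‖ = ‖A.P y - A.P x‖ := by rw [← norm_neg]; congr 1; abel
  rw [e1, e2] at h2
  have e3 : ⟪A.P y - A.P x, y - x⟫_ℝ = ⟪A.P y, y - x⟫_ℝ - ⟪A.P x, y - x⟫_ℝ :=
    inner_sub_left _ _ _
  linarith

/-- Convexity (midpoint form). -/
lemma midpoint_le (x y : H) :
    A.F ((1/2 : ℝ) • (x + y)) ≤ (1/2) * A.F x + (1/2) * A.F y := by
  set z := (1/2 : ℝ) • (x + y) with hz
  have h1 := A.lower z x
  have h2 := A.lower z y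
  have e : (x - z) + (y - z) = 0 := by
    rw [hz]; rw [smul_add]; module
  have : ⟪A.P z, x - z⟫_ℝ + ⟪A.P z, y - z⟫_ℝ = 0 := by
    rw [← inner_add_right, e, inner_zero_right]
  linarith

/-- Local Lipschitz-type continuity. -/
lemma continuous_F : Continuous A.F := by
  rw [Metric.continuous_iff]
  intro x ε hε
  refine ⟨min 1 (ε / (2 * (‖A.P x‖ + 1) + 1)), by positivity, fun y hy => ?_⟩
  have hd1 : ‖y - x‖ < 1 :=
    lt_of_lt_of_le (by rw [← dist_eq_norm]; exact hy) (min_le_left _ _)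
  have hd2 : ‖y - x‖ < ε / (2 * (‖A.P x‖ + 1) + 1) :=
    lt_of_lt_of_le (by rw [← dist_eq_norm]; exact hy) (min_le_right _ _)
  have hinner := abs_le.1 (abs_real_inner_le_norm (A.P x) (y - x))
  have h1 := A.lower x y
  have h2 := A.upper x y
  have hn : 0 ≤ ‖y - x‖ := norm_nonneg _
  have hP : 0 ≤ ‖A.P x‖ := norm_nonneg _
  have hM : 0 < 2 * (‖A.P x‖ + 1) + 1 := by linarith
  have hd2' : ‖y - x‖ * (2 * (‖A.P x‖ + 1) + 1) < ε := by
    rw [← lt_div_iff₀ hM]; exact hd2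
  rw [Real.dist_eq, abs_lt]
  constructor <;> nlinarith [hinner.1, hinner.2, sq_nonneg (‖y - x‖)]

end GradPkg


section Walk

variable (A B : GradPkg H)

set_option maxHeartbeats 1000000 in
/-- One step of the antipodal-killing walk. -/
lemma walk_step (hn : ∀ x, ‖A.P x‖ = ‖B.P x‖) (w : H) (n₀ : ℝ) (h0 : 0 ≤ n₀)
    (hn₀ : n₀ ≤ ‖A.P w‖) (he : ‖A.P w + B.P w‖ ≤ n₀ / 2) :
    ‖A.P w‖ ≤ ‖A.P (w + B.P w)‖ ∧
      ‖A.P (w + B.P w) + B.P (w + B.P w)‖ ≤ 4 * ‖A.P w + B.P w‖ ∧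
      A.F (w + B.P w) ≤ A.F w - (3/8) * n₀^2 := by
  set w' := w + B.P w with hw'
  set P := A.P w
  set Q := B.P w
  set P' := A.P w'
  set Q' := B.P w'
  have hPQ : ‖P‖ = ‖Q‖ := hn w
  have hPQ' : ‖P'‖ = ‖Q'‖ := hn w'
  have hdiff : w' - w = Q := by rw [hw']; abel
  have hfB : ‖Q' - Q‖^2 ≤ ⟪Q' - Q, Q⟫_ℝ := by
    have := B.firm w w'; rwa [hdiff] at this
  have hfA : ‖P' - P‖^2 ≤ ⟪P' - P, Q⟫_ℝ := by
    have := A.firm w w'; rwa [hdiff] at this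
  -- expansion of ‖Q'‖²
  have eQ : ‖Q'‖^2 = ‖Q‖^2 + 2*⟪Q' - Q, Q⟫_ℝ + ‖Q' - Q‖^2 := by
    have e : Q + (Q' - Q) = Q' := by abel
    calc ‖Q'‖^2 = ‖Q + (Q' - Q)‖^2 := by rw [e]
    _ = ‖Q‖^2 + 2*⟪Q, Q' - Q⟫_ℝ + ‖Q' - Q‖^2 := by
        rw [@norm_add_sq_real]
    _ = ‖Q‖^2 + 2*⟪Q' - Q, Q⟫_ℝ + ‖Q' - Q‖^2 := by rw [real_inner_comm]
  have eP : ‖P'‖^2 = ‖P‖^2 + 2*⟪P' - P, P⟫_ℝ + ‖P' - P‖^2 := by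
    have e : P + (P' - P) = P' := by abel
    calc ‖P'‖^2 = ‖P + (P' - P)‖^2 := by rw [e]
    _ = ‖P‖^2 + 2*⟪P, P' - P⟫_ℝ + ‖P' - P‖^2 := by
        rw [@norm_add_sq_real]
    _ = ‖P‖^2 + 2*⟪P' - P, P⟫_ℝ + ‖P' - P‖^2 := by rw [real_inner_comm]
  -- (s1) : ‖Q‖ ≤ ‖Q'‖ hence ‖P‖ ≤ ‖P'‖
  have hQQ'sq : ‖Q‖^2 + 3*‖Q' - Q‖^2 ≤ ‖Q'‖^2 := by
    rw [eQ]; nlinarith [hfB]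
  have hs1 : ‖P‖ ≤ ‖P'‖ := by
    rw [hPQ, hPQ']
    refine le_of_pow_le_pow_left₀ two_ne_zero (norm_nonneg _) ?_
    nlinarith [sq_nonneg ‖Q' - Q‖]
  -- ⟪P'-P, P⟫ ≤ ‖P'-P‖ e - ‖P'-P‖²
  have hsplit : ⟪P' - P, P⟫_ℝ = ⟪P' - P, P + Q⟫_ℝ - ⟪P' - P, Q⟫_ℝ := by
    rw [← inner_sub_right]; congr 1; abel
  have hcs : ⟪P' - P, P + Q⟫_ℝ ≤ ‖P' - P‖ * ‖P + Q‖ := real_inner_le_norm _ _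
  have hPP : ⟪P' - P, P⟫_ℝ ≤ ‖P' - P‖ * ‖P + Q‖ - ‖P' - P‖^2 := by
    rw [hsplit]; linarith [hfA]
  -- ‖P'‖² ≤ ‖P‖² + 2‖ΔP‖e − ‖ΔP‖²
  have hP'up : ‖P'‖^2 ≤ ‖P‖^2 + 2*(‖P' - P‖ * ‖P + Q‖) - ‖P' - P‖^2 := by
    rw [eP]; nlinarith [hPP]
  -- ΔP bound
  have hdP : ‖P' - P‖ ≤ 2 * ‖P + Q‖ := by
    by_cases hz : ‖P' - P‖ = 0
    · rw [hz]; positivity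
    · have hpos : 0 < ‖P' - P‖ := lt_of_le_of_ne (norm_nonneg _) (Ne.symm hz)
      have : ‖P‖^2 ≤ ‖P'‖^2 := by
        have h1 : (0:ℝ) ≤ ‖P‖ := norm_nonneg _
        nlinarith [hs1]
      nlinarith [hP'up]
  -- Q' - Q bound : 3‖ΔQ‖² ≤ ‖P+Q‖²
  have hdQ : ‖Q' - Q‖ ≤ ‖P + Q‖ := by
    have h2ab : 2*(‖P' - P‖ * ‖P + Q‖) - ‖P' - P‖^2 ≤ ‖P + Q‖^2 := by
      nlinarith [sq_nonneg (‖P' - P‖ - ‖P + Q‖)]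
    have hup : ‖Q'‖^2 ≤ ‖Q‖^2 + ‖P + Q‖^2 := by
      have h := hP'up
      rw [hPQ, hPQ'] at h
      linarith
    have h3 : 3*‖Q' - Q‖^2 ≤ ‖P + Q‖^2 := by linarith [hQQ'sq]
    refine le_of_pow_le_pow_left₀ two_ne_zero (norm_nonneg _) ?_
    nlinarith [sq_nonneg ‖Q' - Q‖]
  refine ⟨hs1, ?_, ?_⟩
  · -- e' ≤ 4 e
    have : P' + Q' = (P + Q) + (P' - P) + (Q' - Q) := by abel
    calc ‖P' + Q'‖ = ‖(P + Q) + (P' - P) + (Q' - Q)‖ := by rw [this]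
    _ ≤ ‖(P + Q) + (P' - P)‖ + ‖Q' - Q‖ := norm_add_le _ _
    _ ≤ ‖P + Q‖ + ‖P' - P‖ + ‖Q' - Q‖ := by linarith [norm_add_le (P + Q) (P' - P)]
    _ ≤ 4 * ‖P + Q‖ := by linarith [hdP, hdQ]
  · -- descent
    have hup := A.upper w w'
    rw [hdiff] at hup
    have hePQ : ‖P + Q‖^2 = ‖P‖^2 + 2*⟪P, Q⟫_ℝ + ‖Q‖^2 := norm_add_sq_real _ _
    have hQn : n₀ ≤ ‖Q‖ := by rw [← hPQ]; exact hn₀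
    have he0 : 0 ≤ ‖P + Q‖ := norm_nonneg _
    have hesq : ‖P + Q‖^2 ≤ (n₀/2)^2 := by nlinarith [he]
    have hPQinner : ⟪P, Q⟫_ℝ + (1/2)*‖Q‖^2 ≤ -(3/8) * n₀^2 := by
      have hQsq : n₀^2 ≤ ‖Q‖^2 := by nlinarith [hQn]
      have : ⟪P, Q⟫_ℝ = (‖P + Q‖^2 - ‖P‖^2 - ‖Q‖^2)/2 := by linarith [hePQ]
      rw [this, hPQ]
      nlinarith [hesq, hQsq]
    linarith [hup]

end Walk


section Walk2
variable (A B : GradPkg H)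

set_option maxHeartbeats 800000 in
lemma walk_all (hn : ∀ x, ‖A.P x‖ = ‖B.P x‖) (z₀ : H) (K : ℕ)
    (hK : 4^K * ‖A.P z₀ + B.P z₀‖ ≤ ‖A.P z₀‖ / 2) :
    A.m ≤ A.F z₀ - K * ((3/8) * ‖A.P z₀‖^2) := by
  set n₀ := ‖A.P z₀‖ with hn₀def
  set e₀ := ‖A.P z₀ + B.P z₀‖ with he₀def
  set z : ℕ → H := fun n => Nat.rec z₀ (fun _ w => w + B.P w) n with hzdef
  have hz0 : z 0 = z₀ := rfl
  have hzs : ∀ k, z (k+1) = z k + B.P (z k) := fun _ => rfl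
  have inv : ∀ k, k ≤ K →
      n₀ ≤ ‖A.P (z k)‖ ∧ ‖A.P (z k) + B.P (z k)‖ ≤ 4^k * e₀ ∧
        A.F (z k) ≤ A.F z₀ - k * ((3/8) * n₀^2) := by
    intro k
    induction k with
    | zero =>
      intro _
      refine ⟨le_refl _, ?_, ?_⟩
      · rw [hz0, ← he₀def]; norm_num
      · rw [hz0]; norm_num
    | succ k ih =>
      intro hk1
      have hk : k ≤ K := Nat.le_of_succ_le hk1
      obtain ⟨i1, i2, i3⟩ := ih hk
      have he0 : (0:ℝ) ≤ e₀ := norm_nonneg _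
      have hpow : (4:ℝ)^k ≤ 4^K := by
        apply pow_le_pow_right₀ (by norm_num) hk
      have he_k : ‖A.P (z k) + B.P (z k)‖ ≤ n₀ / 2 := by
        calc ‖A.P (z k) + B.P (z k)‖ ≤ 4^k * e₀ := i2
        _ ≤ 4^K * e₀ := by nlinarith
        _ ≤ n₀ / 2 := hK
      obtain ⟨s1, s2, s3⟩ :=
        walk_step A B hn (z k) n₀ (norm_nonneg _) i1 he_k
      rw [← hzs k] at s1 s2 s3
      refine ⟨le_trans i1 s1, ?_, ?_⟩
      · calc ‖A.P (z (k+1)) + B.P (z (k+1))‖ ≤ 4 * ‖A.P (z k) + B.P (z k)‖ := s2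
        _ ≤ 4 * (4^k * e₀) := by linarith
        _ = 4^(k+1) * e₀ := by ring
      · have hcast : ((k+1 : ℕ) : ℝ) = (k : ℝ) + 1 := by push_cast; ring
        rw [hcast]
        linarith
  have := (inv K (le_refl K)).2.2
  linarith [A.m_le (z K)]

end Walk2


section Tikhonov

variable [CompleteSpace H] (A B : GradPkg H)

set_option maxHeartbeats 1000000 in
lemma tikhonov (ε : ℝ) (hε : 0 < ε) :
    ∃ xh : H, A.P xh + B.P xh + ε • xh = 0 ∧
      ∀ z : H, A.F xh + B.F xh + ε/2 * ‖xh‖^2 ≤ A.F z + B.F z + ε/2 * ‖z‖^2 := by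
  classical
  set Φ : H → ℝ := fun x => A.F x + B.F x + ε/2 * ‖x‖^2 with hΦ
  obtain ⟨cA, hcA⟩ := A.bdd
  obtain ⟨cB, hcB⟩ := B.bdd
  have hbdd : BddBelow (Set.range Φ) := by
    refine ⟨cA + cB, ?_⟩
    rintro y ⟨x, rfl⟩
    have : (0:ℝ) ≤ ε/2 * ‖x‖^2 := by positivity
    simp only [hΦ]
    linarith [hcA x, hcB x]
  set mε := sInf (Set.range Φ) with hmε
  have hmle : ∀ x, mε ≤ Φ x := fun x => csInf_le hbdd ⟨x, rfl⟩
  -- minimizing sequence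
  have hsel : ∀ n : ℕ, ∃ x : H, Φ x < mε + 1/(n+1) := by
    intro n
    obtain ⟨y, hy, hlt⟩ := Real.lt_sInf_add_pos (s := Set.range Φ) ⟨Φ 0, ⟨0, rfl⟩⟩
      (show (0:ℝ) < 1/(n+1) by positivity)
    obtain ⟨x, rfl⟩ := hy
    exact ⟨x, hlt⟩
  choose u hu using hsel
  -- strong convexity estimate
  have hstrong : ∀ x y : H, ε/8 * ‖x - y‖^2 ≤ (1/2) * Φ x + (1/2) * Φ y - mε := by
    intro x y
    have h1 := A.midpoint_le x y
    have h2 := B.midpoint_le x y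
    have hpar : ‖(1/2 : ℝ) • (x + y)‖^2 = (1/2)*‖x‖^2 + (1/2)*‖y‖^2 - (1/4)*‖x - y‖^2 := by
      have hp := parallelogram_law_with_norm ℝ x y
      have hp' : ‖x + y‖^2 + ‖x - y‖^2 = 2*(‖x‖^2 + ‖y‖^2) := by
        exact hp
      have hsm : ‖(1/2 : ℝ) • (x + y)‖^2 = (1/4) * ‖x + y‖^2 := by
        rw [norm_smul, Real.norm_eq_abs, abs_of_pos (by norm_num : (0:ℝ) < 1/2), mul_pow]
        norm_num
      rw [hsm]; linarith
    have h3 := hmle ((1/2 : ℝ) • (x + y))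
    simp only [hΦ] at h3 ⊢
    rw [hpar] at h3
    nlinarith [h1, h2]
  -- Cauchy
  have hcauchy : CauchySeq u := by
    rw [Metric.cauchySeq_iff']
    intro δ hδ
    obtain ⟨N, hN⟩ := exists_nat_gt (8/(ε * δ^2))
    refine ⟨N, fun n hn => ?_⟩
    have hb : ε/8 * ‖u n - u N‖^2 ≤ 1/(n+1) / 2 + 1/(N+1) / 2 := by
      have := hstrong (u n) (u N)
      have h1 := hu n
      have h2 := hu N
      linarith
    have hNb : (1:ℝ)/(N+1) ≤ 1/(N+1) := le_refl _
    have hcast : (N:ℝ) ≤ (n:ℝ) := Nat.cast_le.mpr hn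
    have hnN : (1:ℝ)/(n+1) ≤ 1/(N+1) :=
      one_div_le_one_div_of_le (by positivity) (by linarith)
    have hsq : ‖u n - u N‖^2 < δ^2 := by
      have hNpos : (0:ℝ) < N + 1 := by positivity
      have h8 : 8/(ε * δ^2) < N + 1 := lt_trans hN (by linarith)
      have : (1:ℝ)/(N+1) < ε * δ^2 / 8 := by
        rw [div_lt_iff₀ hNpos]
        rw [div_lt_iff₀ (by positivity : (0:ℝ) < ε * δ^2)] at h8
        nlinarith
      nlinarith [hb, hnN]
    rw [dist_eq_norm]
    have := lt_of_pow_lt_pow_left₀ 2 (le_of_lt hδ) hsq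
    exact this
  obtain ⟨xh, hxh⟩ := cauchySeq_tendsto_of_complete hcauchy
  -- Φ xh = mε
  have hΦcont : Continuous Φ := by
    apply Continuous.add
    apply Continuous.add A.continuous_F B.continuous_F
    continuity
  have hΦlim : Filter.Tendsto (fun n => Φ (u n)) Filter.atTop (nhds (Φ xh)) :=
    (hΦcont.tendsto xh).comp hxh
  have hΦmin : Φ xh ≤ mε := by
    have hup : Filter.Tendsto (fun n : ℕ => mε + 1/(n+1)) Filter.atTop (nhds (mε + 0)) := by
      apply Filter.Tendsto.add tendsto_const_nhds
      apply tendsto_one_div_add_atTop_nhds_zero_nat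
    rw [show mε + 0 = mε by ring] at hup
    exact le_of_tendsto_of_tendsto' hΦlim hup (fun n => le_of_lt (hu n))
  have hmin : ∀ z, Φ xh ≤ Φ z := fun z => le_trans hΦmin (hmle z)
  -- first-order condition
  set v := A.P xh + B.P xh + ε • xh with hv
  refine ⟨xh, ?_, fun z => by simpa only [hΦ] using hmin z⟩
  by_contra hvne
  have hvpos : 0 < ‖v‖ := by
    rw [norm_pos_iff]; exact hvne
  set τ := 1/(1+ε) with hτ
  have hτpos : 0 < τ := by positivity
  have hτlt : τ * (1 + ε/2) < 1 := by
    rw [hτ, div_mul_eq_mul_div, div_lt_one (by positivity)]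
    linarith
  have key : Φ (xh - τ • v) ≤ Φ xh - τ*‖v‖^2 + τ^2*(1+ε/2)*‖v‖^2 := by
    have hA := A.upper xh (xh - τ • v)
    have hB := B.upper xh (xh - τ • v)
    have hd : xh - τ • v - xh = -(τ • v) := by abel
    rw [hd, inner_neg_right, norm_neg] at hA hB
    have hsm : ‖τ • v‖^2 = τ^2 * ‖v‖^2 := by
      rw [norm_smul, Real.norm_eq_abs, abs_of_pos hτpos, mul_pow]
    have hnq : ‖xh - τ • v‖^2 = ‖xh‖^2 - 2*τ*⟪xh, v⟫_ℝ + τ^2*‖v‖^2 := by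
      rw [@norm_sub_sq_real, real_inner_smul_right, hsm]; ring
    have hsum : ⟪A.P xh, τ • v⟫_ℝ + ⟪B.P xh, τ • v⟫_ℝ + ε * (τ * ⟪xh, v⟫_ℝ)
        = τ * ‖v‖^2 := by
      rw [real_inner_smul_right, real_inner_smul_right]
      have : ⟪A.P xh, v⟫_ℝ + ⟪B.P xh, v⟫_ℝ + ε * ⟪xh, v⟫_ℝ = ‖v‖^2 := by
        rw [← real_inner_smul_left, ← inner_add_left, ← inner_add_left, ← hv,
          real_inner_self_eq_norm_sq]
      nlinarith [this]
    simp only [hΦ]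
    rw [hnq]
    nlinarith [hA, hB]
  have hm2 : Φ xh ≤ Φ (xh - τ • v) := hmin _
  have hfac : 0 < τ * ‖v‖^2 * (1 - τ*(1+ε/2)) :=
    mul_pos (mul_pos hτpos (pow_pos hvpos 2)) (by linarith)
  have hre : Φ xh - τ*‖v‖^2 + τ^2*(1+ε/2)*‖v‖^2
      = Φ xh - τ*‖v‖^2*(1 - τ*(1+ε/2)) := by ring
  rw [hre] at key
  simp only [hΦ] at key hm2
  linarith [key, hm2, hfac]

end Tikhonov


section StepA
variable [CompleteSpace H] (A B : GradPkg H)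

set_option maxHeartbeats 1000000 in
lemma small_grad (hn : ∀ x, ‖A.P x‖ = ‖B.P x‖) (ν : ℝ) (hν : 0 < ν) :
    ∃ (x : H) (ε : ℝ), 0 < ε ∧ A.P x + B.P x + ε • x = 0 ∧ ‖A.P x‖ < ν := by
  classical
  set cbar : ℝ := A.F 0 + B.F 0 - A.m - B.m with hcbar
  have hcbar0 : 0 ≤ cbar := by
    have := A.m_le 0
    have := B.m_le 0
    simp only [hcbar]
    linarith [A.m_le 0, B.m_le 0]
  set C₁ : ℝ := 2*cbar + 1 with hC₁
  have hC₁pos : 0 < C₁ := by simp only [hC₁]; linarith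
  set K : ℕ := Nat.ceil ((8/3)*cbar/ν^2) + 1 with hK
  have hKge : ((8:ℝ)/3)*cbar/ν^2 + 1 ≤ (K:ℝ) := by
    rw [hK]
    push_cast
    have := Nat.le_ceil ((8/3)*cbar/ν^2)
    linarith
  have h4K : (0:ℝ) < 4^K := by positivity
  set ε : ℝ := min 1 (ν^2/(4*(4^K)^2*C₁)) with hε
  have hεpos : 0 < ε := by
    apply lt_min one_pos
    positivity
  obtain ⟨xh, hfo, hmin⟩ := tikhonov A B ε hεpos
  by_cases hbig : ‖A.P xh‖ < ν
  · exact ⟨xh, ε, hεpos, hfo, hbig⟩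
  push_neg at hbig
  exfalso
  -- uniform bounds
  have hmin0 := hmin 0
  rw [norm_zero] at hmin0
  have hφ : A.F xh - A.m ≤ cbar := by
    have h1 := B.m_le xh
    have h2 : (0:ℝ) ≤ ε/2 * ‖xh‖^2 := by positivity
    simp only [hcbar]
    linarith
  have hE : ε * ‖xh‖^2 ≤ 2*cbar := by
    have h1 := B.m_le xh
    have h2 := A.m_le xh
    simp only [hcbar] at *
    nlinarith
  -- the gradient-sum norm
  have hsum : A.P xh + B.P xh = -(ε • xh) := by
    have : A.P xh + B.P xh + ε • xh - ε • xh = -(ε • xh) := by rw [hfo]; abel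
    rw [← this]; abel
  have he : ‖A.P xh + B.P xh‖ = ε * ‖xh‖ := by
    rw [hsum, norm_neg, norm_smul, Real.norm_eq_abs, abs_of_pos hεpos]
  have hesq : ‖A.P xh + B.P xh‖^2 ≤ ε * C₁ := by
    rw [he, mul_pow]
    calc ε^2 * ‖xh‖^2 = ε * (ε * ‖xh‖^2) := by ring
    _ ≤ ε * (2*cbar) := by
        apply mul_le_mul_of_nonneg_left hE (le_of_lt hεpos)
    _ ≤ ε * C₁ := by
        apply mul_le_mul_of_nonneg_left _ (le_of_lt hεpos)
        simp only [hC₁]; linarith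
  have hεle : ε ≤ ν^2/(4*(4^K)^2*C₁) := min_le_right _ _
  have hesq2 : ‖A.P xh + B.P xh‖^2 ≤ (ν/(2*4^K))^2 := by
    calc ‖A.P xh + B.P xh‖^2 ≤ ε * C₁ := hesq
    _ ≤ (ν^2/(4*(4^K)^2*C₁)) * C₁ := by
        apply mul_le_mul_of_nonneg_right hεle (le_of_lt hC₁pos)
    _ = (ν/(2*4^K))^2 := by
        field_simp
        try ring
  have heb : ‖A.P xh + B.P xh‖ ≤ ν/(2*4^K) := by
    refine le_of_pow_le_pow_left₀ two_ne_zero (by positivity) hesq2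
  have hwalkcond : 4^K * ‖A.P xh + B.P xh‖ ≤ ‖A.P xh‖ / 2 := by
    calc 4^K * ‖A.P xh + B.P xh‖ ≤ 4^K * (ν/(2*4^K)) := by
          apply mul_le_mul_of_nonneg_left heb (le_of_lt h4K)
    _ = ν/2 := by field_simp; try ring
    _ ≤ ‖A.P xh‖/2 := by linarith
  have hwalk := walk_all A B hn xh K hwalkcond
  have hν2 : ν^2 ≤ ‖A.P xh‖^2 := by nlinarith
  have hKν : cbar + (3/8)*ν^2 ≤ (K:ℝ) * ((3/8) * ν^2) := by
    have hν2pos : 0 < ν^2 := by positivity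
    have := hKge
    have h38 : (0:ℝ) < (3/8)*ν^2 := by positivity
    have : ((8:ℝ)/3)*cbar/ν^2 * ((3/8)*ν^2) + 1 * ((3/8)*ν^2) ≤ (K:ℝ) * ((3/8)*ν^2) := by
      rw [← add_mul]
      apply mul_le_mul_of_nonneg_right hKge (le_of_lt h38)
    calc cbar + (3/8)*ν^2 = ((8:ℝ)/3)*cbar/ν^2 * ((3/8)*ν^2) + 1 * ((3/8)*ν^2) := by
          field_simp
          try ring
    _ ≤ (K:ℝ) * ((3/8) * ν^2) := this
  have hmono : (K:ℝ) * ((3/8) * ν^2) ≤ (K:ℝ) * ((3/8) * ‖A.P xh‖^2) := by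
    apply mul_le_mul_of_nonneg_left _ (Nat.cast_nonneg K)
    linarith
  have : A.m ≤ A.F xh - (K:ℝ) * ((3/8) * ‖A.P xh‖^2) := hwalk
  have hb : (0:ℝ) < (3/8)*ν^2 := by positivity
  linarith

def mPhi : ℝ := sInf (Set.range (fun x => A.F x + B.F x))

set_option linter.unusedSectionVars false in
lemma mPhi_bddBelow : BddBelow (Set.range (fun x => A.F x + B.F x)) := by
  obtain ⟨cA, hcA⟩ := A.bdd
  obtain ⟨cB, hcB⟩ := B.bdd
  exact ⟨cA + cB, by rintro y ⟨x, rfl⟩; exact add_le_add (hcA x) (hcB x)⟩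

lemma mPhi_le (x : H) : mPhi A B ≤ A.F x + B.F x :=
  csInf_le (mPhi_bddBelow A B) ⟨x, rfl⟩

set_option linter.unusedSectionVars false in
lemma mPhi_exists_lt (δ : ℝ) (hδ : 0 < δ) : ∃ z, A.F z + B.F z < mPhi A B + δ := by
  obtain ⟨y, hy, hlt⟩ := Real.lt_sInf_add_pos
    (s := Set.range (fun x => A.F x + B.F x)) ⟨A.F 0 + B.F 0, ⟨0, rfl⟩⟩ hδ
  obtain ⟨z, rfl⟩ := hy
  exact ⟨z, hlt⟩

set_option linter.unusedSectionVars false in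
set_option maxHeartbeats 1000000 in
lemma stepA (hn : ∀ x, ‖A.P x‖ = ‖B.P x‖) (z₁ z₂ : H) :
    mPhi A B ≤ A.F z₁ + B.F z₂ := by
  refine le_of_forall_pos_le_add (fun δ hδ => ?_)
  have hνpos : 0 < δ/(‖z₁‖ + ‖z₂‖ + 1) := by positivity
  obtain ⟨x, ε, hεpos, hfo, hsmall⟩ := small_grad A B hn _ hνpos
  have hsmallB : ‖B.P x‖ < δ/(‖z₁‖ + ‖z₂‖ + 1) := by rw [← hn x]; exact hsmall
  have h1 := A.lower x z₁
  have h2 := B.lower x z₂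
  have hsum : A.P x + B.P x = -(ε • x) := by
    have : A.P x + B.P x + ε • x - ε • x = -(ε • x) := by rw [hfo]; abel
    rw [← this]; abel
  have hinner : ⟪A.P x, z₁ - x⟫_ℝ + ⟪B.P x, z₂ - x⟫_ℝ
      = ⟪A.P x, z₁⟫_ℝ + ⟪B.P x, z₂⟫_ℝ + ε * ‖x‖^2 := by
    rw [inner_sub_right, inner_sub_right]
    have : ⟪A.P x, x⟫_ℝ + ⟪B.P x, x⟫_ℝ = -(ε * ‖x‖^2) := by
      rw [← inner_add_left, hsum, inner_neg_left, real_inner_smul_left,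
        real_inner_self_eq_norm_sq]
    linarith
  have hc1 : -(‖A.P x‖ * ‖z₁‖) ≤ ⟪A.P x, z₁⟫_ℝ := by
    have := abs_le.1 (abs_real_inner_le_norm (A.P x) z₁)
    linarith [this.1]
  have hc2 : -(‖B.P x‖ * ‖z₂‖) ≤ ⟪B.P x, z₂⟫_ℝ := by
    have := abs_le.1 (abs_real_inner_le_norm (B.P x) z₂)
    linarith [this.1]
  have hmx := mPhi_le A B x
  have hεx : (0:ℝ) ≤ ε * ‖x‖^2 := by positivity
  have hz1 : (0:ℝ) ≤ ‖z₁‖ := norm_nonneg _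
  have hz2 : (0:ℝ) ≤ ‖z₂‖ := norm_nonneg _
  have hkey : ‖A.P x‖ * ‖z₁‖ + ‖B.P x‖ * ‖z₂‖ ≤ δ := by
    have hd : 0 < ‖z₁‖ + ‖z₂‖ + 1 := by linarith
    have e1 : ‖A.P x‖ * ‖z₁‖ ≤ (δ/(‖z₁‖ + ‖z₂‖ + 1)) * ‖z₁‖ :=
      mul_le_mul_of_nonneg_right (le_of_lt hsmall) hz1
    have e2 : ‖B.P x‖ * ‖z₂‖ ≤ (δ/(‖z₁‖ + ‖z₂‖ + 1)) * ‖z₂‖ :=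
      mul_le_mul_of_nonneg_right (le_of_lt hsmallB) hz2
    have e3 : (δ/(‖z₁‖ + ‖z₂‖ + 1)) * ‖z₁‖ + (δ/(‖z₁‖ + ‖z₂‖ + 1)) * ‖z₂‖ ≤ δ := by
      rw [div_mul_eq_mul_div, div_mul_eq_mul_div, ← add_div, div_le_iff₀ hd]
      nlinarith
    linarith
  linarith

lemma stepA' (hn : ∀ x, ‖A.P x‖ = ‖B.P x‖) : mPhi A B ≤ A.m + B.m := by
  have h1 : ∀ z₂ : H, mPhi A B - B.F z₂ ≤ A.m := by
    intro z₂
    refine le_csInf ⟨A.F 0, ⟨0, rfl⟩⟩ ?_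
    rintro y ⟨z₁, rfl⟩
    linarith [stepA A B hn z₁ z₂]
  have h2 : mPhi A B - A.m ≤ B.m := by
    refine le_csInf ⟨B.F 0, ⟨0, rfl⟩⟩ ?_
    rintro y ⟨z₂, rfl⟩
    linarith [h1 z₂]
  linarith

end StepA


section GD
variable (A B : GradPkg H)

lemma half_inner (hn : ∀ x, ‖A.P x‖ = ‖B.P x‖) (w : H) :
    2*⟪A.P w, A.P w + B.P w⟫_ℝ = ‖A.P w + B.P w‖^2 := by
  have h1 : ‖A.P w + B.P w‖^2
      = ‖A.P w‖^2 + 2*⟪A.P w, B.P w⟫_ℝ + ‖B.P w‖^2 := norm_add_sq_real _ _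
  have h2 : ⟪A.P w, A.P w + B.P w⟫_ℝ = ‖A.P w‖^2 + ⟪A.P w, B.P w⟫_ℝ := by
    rw [inner_add_right, real_inner_self_eq_norm_sq]
  have h3 : ‖A.P w‖^2 = ‖B.P w‖^2 := by rw [hn w]
  linarith

lemma gd_bound (w v : H) (t : ℝ) (hhalf : 2*⟪A.P w, v⟫_ℝ = ‖v‖^2) :
    A.F w - (t/2)*‖v‖^2 ≤ A.F (w - t • v) ∧
      A.F (w - t • v) ≤ A.F w - (t/2)*‖v‖^2 + (t^2/2)*‖v‖^2 := by
  have hd : w - t • v - w = -(t • v) := by abel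
  have h1 := A.lower w (w - t • v)
  have h2 := A.upper w (w - t • v)
  rw [hd, inner_neg_right, real_inner_smul_right] at h1 h2
  rw [norm_neg] at h2
  have hsm : ‖t • v‖^2 = t^2 * ‖v‖^2 := by
    rw [norm_smul, Real.norm_eq_abs, mul_pow, sq_abs]
  rw [hsm] at h2
  have hh2 : t*(2*⟪A.P w, v⟫_ℝ) = t*‖v‖^2 := by rw [hhalf]
  constructor <;> nlinarith [h1, h2, hh2]

set_option maxHeartbeats 1600000 in
lemma D_const [CompleteSpace H] (hn : ∀ x, ‖A.P x‖ = ‖B.P x‖) (x₀ : H) :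
    A.F x₀ - B.F x₀ = A.m - B.m := by
  classical
  have hn' : ∀ x, ‖B.P x‖ = ‖A.P x‖ := fun x => (hn x).symm
  have hC0 : 0 ≤ A.F x₀ - A.m := by linarith [A.m_le x₀]
  have key : ∀ t : ℝ, 0 < t → t < 1 → ∀ η : ℝ, 0 < η →
      |A.F x₀ - B.F x₀ - (A.m - B.m)| ≤ t*(A.F x₀ - A.m)/(1-t) + η := by
    intro t ht0 ht1 η hη
    set x : ℕ → H := fun n => Nat.rec x₀ (fun _ w => w - t • (A.P w + B.P w)) n with hxdef
    have hx0 : x 0 = x₀ := rfl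
    have hxs : ∀ k, x (k+1) = x k - t • (A.P (x k) + B.P (x k)) := fun _ => rfl
    set s : ℕ → ℝ := fun k => ‖A.P (x k) + B.P (x k)‖^2 with hsdef
    have hs0 : ∀ k, 0 ≤ s k := fun k => sq_nonneg _
    set S : ℕ → ℝ := fun N => ∑ k ∈ Finset.range N, s k with hSdef
    have hSsucc : ∀ N, S (N+1) = S N + s N := by
      intro N; simp only [hSdef]; rw [Finset.sum_range_succ]
    have hS0 : S 0 = 0 := by simp [hSdef]
    have hSnonneg : ∀ N, 0 ≤ S N := by
      intro N
      simp only [hSdef]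
      exact Finset.sum_nonneg (fun k _ => hs0 k)
    have hstepA : ∀ k, A.F (x k) - (t/2)*(s k) ≤ A.F (x (k+1)) ∧
        A.F (x (k+1)) ≤ A.F (x k) - (t/2)*(s k) + (t^2/2)*(s k) := by
      intro k
      rw [hxs k]
      exact gd_bound A (x k) _ t (half_inner A B hn (x k))
    have hstepB : ∀ k, B.F (x k) - (t/2)*(s k) ≤ B.F (x (k+1)) ∧
        B.F (x (k+1)) ≤ B.F (x k) - (t/2)*(s k) + (t^2/2)*(s k) := by
      intro k
      rw [hxs k]
      have hcomm : A.P (x k) + B.P (x k) = B.P (x k) + A.P (x k) := add_comm _ _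
      have hhalf := half_inner B A hn' (x k)
      rw [← hcomm] at hhalf
      exact gd_bound B (x k) _ t hhalf
    -- S bounded
    have hdesc : ∀ N, A.F (x N) ≤ A.F x₀ - (t/2)*(1-t)*(S N) := by
      intro N
      induction N with
      | zero => rw [hx0, hS0]; simp
      | succ N ih =>
        have h2 := (hstepA N).2
        rw [hSsucc]
        nlinarith [hs0 N]
    set Sb : ℝ := (A.F x₀ - A.m)/((t/2)*(1-t)) with hSb
    have htt : (0:ℝ) < (t/2)*(1-t) := by nlinarith
    have hSb' : ∀ N, S N ≤ Sb := by
      intro N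
      rw [hSb, le_div_iff₀ htt]
      have := A.m_le (x N)
      have := hdesc N
      nlinarith
    have hSbnonneg : 0 ≤ Sb := le_trans (hSnonneg 0) (hSb' 0)
    -- D drift
    have hdrift : ∀ N, |(A.F (x N) - B.F (x N)) - (A.F x₀ - B.F x₀)| ≤ (t^2/2)*(S N) := by
      intro N
      induction N with
      | zero => rw [hx0, hS0]; simp
      | succ N ih =>
        have hA := hstepA N
        have hB := hstepB N
        have hstep : |(A.F (x (N+1)) - B.F (x (N+1))) - (A.F (x N) - B.F (x N))|
            ≤ (t^2/2)*(s N) := by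
          rw [abs_le]
          constructor
          · linarith [hA.1, hB.2]
          · linarith [hA.2, hB.1]
        calc |(A.F (x (N+1)) - B.F (x (N+1))) - (A.F x₀ - B.F x₀)|
            ≤ |(A.F (x (N+1)) - B.F (x (N+1))) - (A.F (x N) - B.F (x N))|
              + |(A.F (x N) - B.F (x N)) - (A.F x₀ - B.F x₀)| := abs_sub_le _ _ _
        _ ≤ (t^2/2)*(s N) + (t^2/2)*(S N) := add_le_add hstep ih
        _ = (t^2/2)*(S (N+1)) := by rw [hSsucc]; ring
    -- distance telescoping
    have hdist : ∀ N (z : H), ‖x (N+1) - z‖^2 ≤ ‖x N - z‖^2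
        - 2*t*((A.F (x N) + B.F (x N)) - (A.F z + B.F z)) + t^2 * s N := by
      intro N z
      have he : x (N+1) - z = (x N - z) - t • (A.P (x N) + B.P (x N)) := by
        rw [hxs N]; abel
      have hnrm : ‖x (N+1) - z‖^2 = ‖x N - z‖^2
          - 2*(t*⟪A.P (x N) + B.P (x N), x N - z⟫_ℝ)
          + t^2 * ‖A.P (x N) + B.P (x N)‖^2 := by
        rw [he, @norm_sub_sq_real, real_inner_smul_right, norm_smul,
          Real.norm_eq_abs, mul_pow, sq_abs, real_inner_comm]
      have hlowA := A.lower (x N) z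
      have hlowB := B.lower (x N) z
      have hneg : z - x N = -(x N - z) := by abel
      rw [hneg, inner_neg_right] at hlowA hlowB
      have hadd : ⟪A.P (x N) + B.P (x N), x N - z⟫_ℝ
          = ⟪A.P (x N), x N - z⟫_ℝ + ⟪B.P (x N), x N - z⟫_ℝ := inner_add_left _ _ _
      have hlow : (A.F (x N) + B.F (x N)) - (A.F z + B.F z)
          ≤ ⟪A.P (x N) + B.P (x N), x N - z⟫_ℝ := by
        rw [hadd]; linarith
      have ht0' : (0:ℝ) ≤ 2*t := by linarith
      have hsN : s N = ‖A.P (x N) + B.P (x N)‖^2 := rfl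
      rw [hsN]
      nlinarith [mul_le_mul_of_nonneg_left hlow ht0']
    have hsumdist : ∀ N (z : H), ‖x N - z‖^2
        + 2*t*(∑ k ∈ Finset.range N, ((A.F (x k) + B.F (x k)) - (A.F z + B.F z)))
        ≤ ‖x₀ - z‖^2 + t^2 * S N := by
      intro N z
      induction N with
      | zero => rw [hx0, hS0]; simp
      | succ N ih =>
        have h1 := hdist N z
        rw [Finset.sum_range_succ, hSsucc]
        nlinarith [h1, ih]
    -- reach near-minimum of Φ
    have hreach : ∃ N, A.F (x N) + B.F (x N) < mPhi A B + η := by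
      obtain ⟨z, hz⟩ := mPhi_exists_lt A B (η/2) (by linarith)
      by_contra hcon
      push_neg at hcon
      have hterm : ∀ k, η/2 ≤ (A.F (x k) + B.F (x k)) - (A.F z + B.F z) := by
        intro k
        have := hcon k
        linarith
      have hsum_lb : ∀ N : ℕ, (N:ℝ)*(η/2)
          ≤ ∑ k ∈ Finset.range N, ((A.F (x k) + B.F (x k)) - (A.F z + B.F z)) := by
        intro N
        calc (N:ℝ)*(η/2) = ∑ _k ∈ Finset.range N, (η/2) := by
              rw [Finset.sum_const, Finset.card_range, nsmul_eq_mul]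
        _ ≤ _ := Finset.sum_le_sum (fun k _ => hterm k)
      obtain ⟨N, hN⟩ := exists_nat_gt ((‖x₀ - z‖^2 + t^2 * Sb)/(2*t*(η/2)))
      have h1 := hsumdist N z
      have h2 := hsum_lb N
      have h3 : 2*t*((N:ℝ)*(η/2)) ≤ ‖x₀ - z‖^2 + t^2 * S N := by
        have hmul : 2*t*((N:ℝ)*(η/2)) ≤ 2*t*(∑ k ∈ Finset.range N,
            ((A.F (x k) + B.F (x k)) - (A.F z + B.F z))) := by
          apply mul_le_mul_of_nonneg_left h2 (by linarith)
        nlinarith [sq_nonneg (‖x N - z‖)]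
      have h4 : t^2 * S N ≤ t^2 * Sb :=
        mul_le_mul_of_nonneg_left (hSb' N) (sq_nonneg t)
      have h5 : (0:ℝ) < 2*t*(η/2) := by positivity
      rw [div_lt_iff₀ h5] at hN
      nlinarith
    obtain ⟨N, hN⟩ := hreach
    -- pinch F and G at x N
    have hstep' := stepA' A B hn
    have hAlb := A.m_le (x N)
    have hBlb := B.m_le (x N)
    have hAub : A.F (x N) ≤ A.m + η := by linarith
    have hBub : B.F (x N) ≤ B.m + η := by linarith
    have hDN : |(A.F (x N) - B.F (x N)) - (A.m - B.m)| ≤ η := by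
      rw [abs_le]; constructor <;> linarith
    have hdriftN := hdrift N
    have hfinal : |A.F x₀ - B.F x₀ - (A.m - B.m)| ≤ (t^2/2)*(S N) + η := by
      calc |A.F x₀ - B.F x₀ - (A.m - B.m)|
          ≤ |(A.F x₀ - B.F x₀) - (A.F (x N) - B.F (x N))|
            + |(A.F (x N) - B.F (x N)) - (A.m - B.m)| := abs_sub_le _ _ _
      _ ≤ (t^2/2)*(S N) + η := by
          refine add_le_add ?_ hDN
          rw [abs_sub_comm]
          exact hdriftN
    have hSbeq : (t^2/2)*Sb = t*(A.F x₀ - A.m)/(1-t) := by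
      have ht0' : t ≠ 0 := ne_of_gt ht0
      have h1t : (1:ℝ)-t ≠ 0 := ne_of_gt (by linarith)
      rw [hSb]
      field_simp
    have : (t^2/2)*(S N) ≤ (t^2/2)*Sb :=
      mul_le_mul_of_nonneg_left (hSb' N) (by positivity)
    linarith
  -- conclude: the abs is ≤ every positive number
  have habs : ∀ ρ : ℝ, 0 < ρ → |A.F x₀ - B.F x₀ - (A.m - B.m)| ≤ ρ := by
    intro ρ hρ
    set C := A.F x₀ - A.m with hC
    set t : ℝ := min (1/2) (ρ/(4*C+4)) with htdef
    have ht0 : 0 < t := by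
      apply lt_min (by norm_num)
      positivity
    have ht1 : t < 1 := lt_of_le_of_lt (min_le_left _ _) (by norm_num)
    have hthalf : t ≤ 1/2 := min_le_left _ _
    have htρ : t ≤ ρ/(4*C+4) := min_le_right _ _
    have h1t : (1:ℝ)/2 ≤ 1 - t := by linarith
    have hmain := key t ht0 ht1 (ρ/2) (by linarith)
    have hbound : t*C/(1-t) ≤ ρ/2 := by
      have hCpos : (0:ℝ) < 4*C+4 := by linarith
      have htC : 0 ≤ t*C := mul_nonneg (le_of_lt ht0) hC0
      have h4 : t*C/(1-t) ≤ (t*C)/(1/2) :=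
        div_le_div_of_nonneg_left htC (by norm_num) h1t
      have h5 : (t*C)/(1/2) = 2*(t*C) := by ring
      have h6 : t*C ≤ (ρ/(4*C+4))*C := mul_le_mul_of_nonneg_right htρ hC0
      have h7 : 2*((ρ/(4*C+4))*C) ≤ ρ/2 := by
        rw [div_mul_eq_mul_div, ← mul_div_assoc,
          div_le_div_iff₀ hCpos (by norm_num : (0:ℝ) < 2)]
        nlinarith
      linarith
    linarith
  have : |A.F x₀ - B.F x₀ - (A.m - B.m)| ≤ 0 := by
    by_contra hpos
    push_neg at hpos
    have := habs (|A.F x₀ - B.F x₀ - (A.m - B.m)|/2) (by linarith)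
    linarith
  have := abs_nonneg (A.F x₀ - B.F x₀ - (A.m - B.m))
  have heq : |A.F x₀ - B.F x₀ - (A.m - B.m)| = 0 := le_antisymm ‹_› ‹_›
  rw [abs_eq_zero] at heq
  linarith [heq]

end GD

theorem mainCore [CompleteSpace H] (A B : GradPkg H)
    (hn : ∀ x, ‖A.P x‖ = ‖B.P x‖) (x : H) : A.P x = B.P x := by
  have hD : ∀ y : H, A.F y - B.F y = A.F x - B.F x := by
    intro y
    rw [D_const A B hn y, D_const A B hn x]
  set d := A.P x - B.P x with hd
  have h1 := A.lower x (x + d)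
  have h2 := B.upper x (x + d)
  have he : x + d - x = d := by abel
  rw [he] at h1 h2
  have hDx := hD (x + d)
  have hsub : ⟪A.P x, d⟫_ℝ - ⟪B.P x, d⟫_ℝ = ‖d‖^2 := by
    rw [← inner_sub_left, ← hd, real_inner_self_eq_norm_sq]
  have hcontr : ‖d‖^2 ≤ (1/2)*‖d‖^2 := by linarith
  have : ‖d‖^2 ≤ 0 := by linarith
  have hz : ‖d‖ = 0 := by
    have := sq_nonneg ‖d‖
    have hdd : ‖d‖^2 = 0 := le_antisymm ‹_› ‹_›
    exact pow_eq_zero_iff two_ne_zero |>.mp hdd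
  have : d = 0 := norm_eq_zero.mp hz
  rw [hd] at this
  exact sub_eq_zero.mp this


section Extract

variable (f : H → EReal) (pf : H → H)

lemma prox_ne_top (hf : Gamma0 f) (hprox : ∀ x, IsProx f x (pf x)) (x : H) :
    f (pf x) ≠ ⊤ := by
  obtain ⟨y₀, hy₀⟩ := hf.1
  intro hc
  have h := hprox x y₀
  rw [hc, EReal.top_add_coe] at h
  have hyb := hf.2.1 y₀
  lift (f y₀) to ℝ using ⟨hy₀, hyb⟩ with a
  rw [← EReal.coe_add] at h
  exact (EReal.coe_ne_top _) (top_le_iff.mp h)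

lemma prox_real (hf : Gamma0 f) (hprox : ∀ x, IsProx f x (pf x)) (x y : H)
    (hy : f y ≠ ⊤) :
    (f (pf x)).toReal + (1:ℝ)/2 * ‖x - pf x‖^2
      ≤ (f y).toReal + (1:ℝ)/2 * ‖x - y‖^2 := by
  have h := hprox x y
  have h1 := prox_ne_top f pf hf hprox x
  have hb := hf.2.1 (pf x)
  have hyb := hf.2.1 y
  lift (f (pf x)) to ℝ using ⟨h1, hb⟩ with a
  lift (f y) to ℝ using ⟨hy, hyb⟩ with b
  rw [← EReal.coe_add, ← EReal.coe_add, EReal.coe_le_coe_iff] at h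
  simpa using h

set_option maxHeartbeats 1000000 in
lemma subgrad_real (hf : Gamma0 f) (hprox : ∀ x, IsProx f x (pf x)) (x v : H)
    (hv : f v ≠ ⊤) :
    (f (pf x)).toReal + ⟪x - pf x, v - pf x⟫_ℝ ≤ (f v).toReal := by
  refine le_of_forall_pos_le_add (fun ε hε => ?_)
  set p := pf x with hp
  set Z := ‖v - p‖^2 with hZ
  have hZ0 : 0 ≤ Z := sq_nonneg _
  set t := min 1 (2*ε/(Z+1)) with ht
  have ht0 : 0 < t := lt_min one_pos (by positivity)
  have ht1 : t ≤ 1 := min_le_left _ _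
  have hconv := hf.2.2.1 p v (1-t) t (by linarith) (le_of_lt ht0) (by ring)
  have hproxm := hprox x ((1-t) • p + t • v)
  rw [← hp] at hproxm
  have hpfin : f p ≠ ⊤ := prox_ne_top f pf hf hprox x
  have hpb := hf.2.1 p
  have hvb := hf.2.1 v
  have hmb := hf.2.1 ((1-t) • p + t • v)
  lift (f p) to ℝ using ⟨hpfin, hpb⟩ with a
  lift (f v) to ℝ using ⟨hv, hvb⟩ with b
  rw [← EReal.coe_mul, ← EReal.coe_mul, ← EReal.coe_add] at hconv
  have hmt : f ((1-t) • p + t • v) ≠ ⊤ := by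
    intro hc; rw [hc] at hconv; exact (EReal.coe_ne_top _) (top_le_iff.mp hconv)
  lift (f ((1-t) • p + t • v)) to ℝ using ⟨hmt, hmb⟩ with m
  rw [EReal.coe_le_coe_iff] at hconv
  rw [← EReal.coe_add, ← EReal.coe_add, EReal.coe_le_coe_iff] at hproxm
  have hxm : x - ((1-t) • p + t • v) = (x - p) - t • (v - p) := by
    rw [smul_sub, sub_smul, one_smul]; abel
  have hexp : ‖x - ((1-t) • p + t • v)‖^2
      = ‖x - p‖^2 - 2*(t*⟪x - p, v - p⟫_ℝ) + t^2*Z := by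
    rw [hxm, @norm_sub_sq_real, real_inner_smul_right, norm_smul,
      Real.norm_eq_abs, mul_pow, sq_abs]
  rw [hexp] at hproxm
  simp only [EReal.toReal_coe]
  -- divide by t
  have hdiv : a + ⟪x - p, v - p⟫_ℝ ≤ b + (t/2)*Z := by
    by_contra hcon
    push_neg at hcon
    have hmul : t*(b + (t/2)*Z) < t*(a + ⟪x - p, v - p⟫_ℝ) :=
      mul_lt_mul_of_pos_left hcon ht0
    nlinarith [hproxm, hconv]
  have htZ : (t/2)*Z ≤ ε := by
    have hle : t ≤ 2*ε/(Z+1) := min_le_right _ _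
    have hZ1 : (0:ℝ) < Z + 1 := by linarith
    have h1 : t*(Z+1) ≤ 2*ε := by
      rw [← le_div_iff₀ hZ1]; exact hle
    nlinarith
  linarith

end Extract

section Build

variable (f : H → EReal) (pf : H → H)

lemma inner_half (z p : H) :
    ⟪z, p⟫_ℝ - 1/2*‖p‖^2 = 1/2*‖z‖^2 - 1/2*‖z - p‖^2 := by
  have h := norm_sub_sq_real z p
  linarith

lemma sq_split (x y : H) : ‖y‖^2 = ‖x‖^2 + 2*⟪x, y - x⟫_ℝ + ‖y - x‖^2 := by
  have h : x + (y - x) = y := by abel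
  calc ‖y‖^2 = ‖x + (y - x)‖^2 := by rw [h]
  _ = ‖x‖^2 + 2*⟪x, y - x⟫_ℝ + ‖y - x‖^2 := norm_add_sq_real _ _

lemma inner_le_half (a b : H) : ⟪a, b - a⟫_ℝ ≤ 1/2*‖b‖^2 - 1/2*‖a‖^2 := by
  have h := sq_split a b
  nlinarith [sq_nonneg ‖b - a‖]

set_option maxHeartbeats 1000000 in
def mkPkg (hf : Gamma0 f) (hconj : ∃ c : ℝ, ∀ x, (c : EReal) ≤ fenchel f x)
    (hprox : ∀ x, IsProx f x (pf x)) : GradPkg H where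
  P := pf
  F := fun x => ⟪x, pf x⟫_ℝ - 1/2*‖pf x‖^2 - (f (pf x)).toReal
  lower := by
    intro x y
    have hpr := prox_real f pf hf hprox y (pf x) (prox_ne_top f pf hf hprox x)
    have e1 := inner_half y (pf x)
    have e2 := inner_half y (pf y)
    have e3 : ⟪y - x, pf x⟫_ℝ = ⟪y, pf x⟫_ℝ - ⟪x, pf x⟫_ℝ := inner_sub_left _ _ _
    have e4 : ⟪pf x, y - x⟫_ℝ = ⟪y - x, pf x⟫_ℝ := real_inner_comm _ _
    linarith
  upper := by
    intro x y
    have hsub := subgrad_real f pf hf hprox x (pf y) (prox_ne_top f pf hf hprox y)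
    have hq := inner_le_half (x - pf x) (y - pf y)
    have hcomb : ⟪x - pf x, pf y - pf x⟫_ℝ + ⟪x - pf x, (y - pf y) - (x - pf x)⟫_ℝ
        = ⟪x - pf x, y - x⟫_ℝ := by
      rw [← inner_add_right]; congr 1; abel
    have e1 := inner_half x (pf x)
    have e2 := inner_half y (pf y)
    have esq := sq_split x y
    have hsplit2 : ⟪x - pf x, y - x⟫_ℝ = ⟪x, y - x⟫_ℝ - ⟪pf x, y - x⟫_ℝ :=
      inner_sub_left _ _ _
    linarith
  bdd := by
    obtain ⟨c, hc⟩ := hconj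
    refine ⟨c, fun x => ?_⟩
    have hcx := hc (x - pf x)
    have hub : fenchel f (x - pf x)
        ≤ ((⟪x - pf x, pf x⟫_ℝ - (f (pf x)).toReal : ℝ) : EReal) := by
      refine iSup_le (fun v => ?_)
      by_cases hv : f v = ⊤
      · rw [hv, EReal.sub_top]
        exact bot_le
      · have hvb := hf.2.1 v
        have hsg := subgrad_real f pf hf hprox x v hv
        have hveq : ((f v).toReal : EReal) = f v := EReal.coe_toReal hv hvb
        rw [← hveq, ← EReal.coe_sub, EReal.coe_le_coe_iff]
        have hsplit : ⟪x - pf x, v - pf x⟫_ℝ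
            = ⟪x - pf x, v⟫_ℝ - ⟪x - pf x, pf x⟫_ℝ := inner_sub_right _ _ _
        linarith
    have hfin : (c : EReal) ≤ ((⟪x - pf x, pf x⟫_ℝ - (f (pf x)).toReal : ℝ) : EReal) :=
      le_trans hcx hub
    rw [EReal.coe_le_coe_iff] at hfin
    have hinner : ⟪x, pf x⟫_ℝ = ⟪x - pf x, pf x⟫_ℝ + ‖pf x‖^2 := by
      rw [inner_sub_left, real_inner_self_eq_norm_sq]; ring
    have := sq_nonneg ‖pf x‖
    linarith

end Build


/-- If `f*` and `g*` are bounded below, then the proximal operators of `f` and `g` have equal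
norms everywhere if and only if they coincide everywhere. -/
theorem prox_norm_eq_iff_prox_eq
    (f g : H → EReal) (hf : Gamma0 f) (hg : Gamma0 g)
    (hfconj : ∃ c : ℝ, ∀ x, (c : EReal) ≤ fenchel f x)
    (hgconj : ∃ c : ℝ, ∀ x, (c : EReal) ≤ fenchel g x)
    (proxf proxg : H → H)
    (hproxf : ∀ x, IsProx f x (proxf x)) (hproxg : ∀ x, IsProx g x (proxg x)) :
    (∀ x, ‖proxf x‖ = ‖proxg x‖) ↔ (∀ x, proxf x = proxg x) := by
  constructor
  · intro hnorm x
    exact mainCore (mkPkg f proxf hf hfconj hproxf) (mkPkg g proxg hg hgconj hproxg)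
      hnorm x
  · intro h x
    rw [h x]
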